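/- Limiting variance of the fixed-asymmetry smoothed estimator: for t₀∈[0,1], define D_{t₀}(x) := 1{τ(x)>0} + t₀·1{τ(x)=0}. Then Var(ψ(D_{t₀}, π₁, (μ₁,μ₀))) = Var(d₀(X)·μ₁(X)+(1−d₀(X))·μ₀(X)) + E[1{τ(X)>0}·σ₁²(X)/π₁(X) + 1{τ(X)<0}·σ₀²(X)/(1−π₁(X))] + E[(t₀²·σ₁²(X)/π₁(X) + (1−t₀)²·σ₀²(X)/(1−π₁(X)))·1{τ(X)=0}], i.e., it splits into a regular part not depending on t₀ and a nonregular part supported on {τ(X)=0} depending on t₀. -/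

import Mathlib

open MeasureTheory ProbabilityTheory Filter Topology
open scoped Classical

/-- AIPW score `ψ(D, p, (m₁, m₀))` evaluated at a sample point `ω`. -/
noncomputable def aipw {Ω 𝒳 : Type*} (X : Ω → 𝒳) (A Y : Ω → ℝ)
    (D p m₁ m₀ : 𝒳 → ℝ) (ω : Ω) : ℝ :=
  (A ω * D (X ω) + (1 - A ω) * (1 - D (X ω))) /
      (A ω * p (X ω) + (1 - A ω) * (1 - p (X ω))) *
    (Y ω - (A ω * m₁ (X ω) + (1 - A ω) * m₀ (X ω)))
  + D (X ω) * m₁ (X ω) + (1 - D (X ω)) * m₀ (X ω)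

lemma L2mul' {Ω : Type*} [MeasurableSpace Ω] {P : Measure Ω} {f g : Ω → ℝ}
    (hf : MemLp f 2 P) (hg : MemLp g 2 P) : Integrable (fun ω => f ω * g ω) P := by
  exact hf.integrable_mul hg

lemma int_bdd_mul {Ω : Type*} [MeasurableSpace Ω] {P : Measure Ω} {f g : Ω → ℝ}
    (hg : Integrable g P) (hf : AEStronglyMeasurable f P) (C : ℝ) (hC : ∀ ω, |f ω| ≤ C) :
    Integrable (fun ω => f ω * g ω) P :=
  hg.bdd_mul (c := C) hf (ae_of_all _ fun ω => by simpa [Real.norm_eq_abs] using hC ω)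

lemma key_integral {Ω 𝒳 : Type*} [MeasurableSpace Ω] [MeasurableSpace 𝒳]
    (P : Measure Ω) [IsProbabilityMeasure P] (X : Ω → 𝒳) (hX : Measurable X)
    (φ h : 𝒳 → ℝ) (hφ : Measurable φ)
    (g : Ω → ℝ) (hg : Integrable g P)
    (hint : Integrable (fun ω => φ (X ω) * g ω) P)
    (hcond : P[g | MeasurableSpace.comap X inferInstance] =ᵐ[P] fun ω => h (X ω)) :
    ∫ ω, φ (X ω) * g ω ∂P = ∫ ω, φ (X ω) * h (X ω) ∂P := by
  have hm : MeasurableSpace.comap X inferInstance ≤ ‹MeasurableSpace Ω› := hX.comap_le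
  have hφX : StronglyMeasurable[MeasurableSpace.comap X inferInstance] (fun ω => φ (X ω)) :=
    (hφ.comp (Measurable.of_comap_le le_rfl)).stronglyMeasurable
  have hmul := condExp_mul_of_stronglyMeasurable_left (μ := P) hφX
    (by exact hint) hg
  calc ∫ ω, φ (X ω) * g ω ∂P
      = ∫ ω, (P[(fun ω => φ (X ω)) * g | MeasurableSpace.comap X inferInstance]) ω ∂P := by
        rw [integral_condExp hm]; rfl
    _ = ∫ ω, φ (X ω) * h (X ω) ∂P := by
        refine integral_congr_ae ?_
        filter_upwards [hmul, hcond] with ω h1 h2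
        simp only [Pi.mul_apply] at h1 ⊢
        rw [h1, h2]

set_option maxHeartbeats 2000000 in
/-- Limiting variance of the fixed-asymmetry smoothed estimator: for
`t₀ ∈ [0,1]`, define `D_{t₀}(x) := 1{τ(x)>0} + t₀·1{τ(x)=0}` with `τ = μ₁ − μ₀`. Then
`Var(ψ(D_{t₀}, π₁, (μ₁,μ₀)))` equals
`Var(d₀(X)μ₁(X)+(1−d₀(X))μ₀(X)) + E[1{τ(X)>0}σ₁²(X)/π₁(X) + 1{τ(X)<0}σ₀²(X)/(1−π₁(X))]
 + E[(t₀²σ₁²(X)/π₁(X) + (1−t₀)²σ₀²(X)/(1−π₁(X)))·1{τ(X)=0}]`,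
a regular part not depending on `t₀` plus a nonregular part supported on `{τ(X)=0}`. -/
theorem stmt_10 {Ω 𝒳 : Type*} [MeasurableSpace Ω] [MeasurableSpace 𝒳]
    (P : Measure Ω) [IsProbabilityMeasure P]
    (X : Ω → 𝒳) (A Y : Ω → ℝ)
    (hX : Measurable X) (hA : Measurable A) (hY : Measurable Y)
    (hAbin : ∀ ω, A ω = 0 ∨ A ω = 1) (hYL2 : MemLp Y 2 P)
    (c : ℝ) (hc : c ∈ Set.Ioo (0 : ℝ) (1 / 2))
    (π₁ : 𝒳 → ℝ) (hπ₁m : Measurable π₁) (hπ₁r : ∀ x, π₁ x ∈ Set.Icc c (1 - c))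
    (hcondA : P[A | MeasurableSpace.comap X inferInstance]
      =ᵐ[P] fun ω => π₁ (X ω))
    (μ₁ μ₀ : 𝒳 → ℝ) (hμ₁m : Measurable μ₁) (hμ₀m : Measurable μ₀)
    (hμ₁L2 : MemLp (fun ω => μ₁ (X ω)) 2 P) (hμ₀L2 : MemLp (fun ω => μ₀ (X ω)) 2 P)
    (hcond1 : P[fun ω => A ω * Y ω | MeasurableSpace.comap X inferInstance]
      =ᵐ[P] fun ω => μ₁ (X ω) * π₁ (X ω))
    (hcond0 : P[fun ω => (1 - A ω) * Y ω | MeasurableSpace.comap X inferInstance]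
      =ᵐ[P] fun ω => μ₀ (X ω) * (1 - π₁ (X ω)))
    (σ₁sq σ₀sq : 𝒳 → ℝ) (hσ₁m : Measurable σ₁sq) (hσ₀m : Measurable σ₀sq)
    (hσ₁nn : ∀ x, 0 ≤ σ₁sq x) (hσ₀nn : ∀ x, 0 ≤ σ₀sq x)
    (hσ₁L1 : Integrable (fun ω => σ₁sq (X ω)) P)
    (hσ₀L1 : Integrable (fun ω => σ₀sq (X ω)) P)
    (hcondsq1 : P[fun ω => A ω * Y ω ^ 2 | MeasurableSpace.comap X inferInstance]
      =ᵐ[P] fun ω => (μ₁ (X ω) ^ 2 + σ₁sq (X ω)) * π₁ (X ω))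
    (hcondsq0 : P[fun ω => (1 - A ω) * Y ω ^ 2 | MeasurableSpace.comap X inferInstance]
      =ᵐ[P] fun ω => (μ₀ (X ω) ^ 2 + σ₀sq (X ω)) * (1 - π₁ (X ω)))
    (t₀ : ℝ) (ht₀ : t₀ ∈ Set.Icc (0 : ℝ) 1)
    (Dt : 𝒳 → ℝ)
    (hDt : ∀ x, Dt x = (if 0 < μ₁ x - μ₀ x then (1 : ℝ) else 0)
      + t₀ * (if μ₁ x - μ₀ x = 0 then (1 : ℝ) else 0))
    (d₀ : 𝒳 → ℝ) (hd₀ : ∀ x, d₀ x = if 0 < μ₁ x - μ₀ x then (1 : ℝ) else 0) :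
    variance (aipw X A Y Dt π₁ μ₁ μ₀) P
      = variance (fun ω => d₀ (X ω) * μ₁ (X ω) + (1 - d₀ (X ω)) * μ₀ (X ω)) P
        + ∫ ω, ((if 0 < μ₁ (X ω) - μ₀ (X ω) then (1 : ℝ) else 0) * σ₁sq (X ω) / π₁ (X ω)
            + (if μ₁ (X ω) - μ₀ (X ω) < 0 then (1 : ℝ) else 0) * σ₀sq (X ω)
              / (1 - π₁ (X ω))) ∂P
        + ∫ ω, (t₀ ^ 2 * σ₁sq (X ω) / π₁ (X ω)
            + (1 - t₀) ^ 2 * σ₀sq (X ω) / (1 - π₁ (X ω)))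
            * (if μ₁ (X ω) - μ₀ (X ω) = 0 then (1 : ℝ) else 0) ∂P := by
  obtain ⟨hc0, hc2⟩ := hc
  obtain ⟨ht₀0, ht₀1⟩ := ht₀
  -- basic positivity facts
  have hπpos : ∀ x, 0 < π₁ x := fun x => lt_of_lt_of_le hc0 (hπ₁r x).1
  have h1πpos : ∀ x, 0 < 1 - π₁ x := fun x => by have := (hπ₁r x).2; linarith
  have hπc : ∀ x, c ≤ π₁ x := fun x => (hπ₁r x).1
  have h1πc : ∀ x, c ≤ 1 - π₁ x := fun x => by have := (hπ₁r x).2; linarith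
  have hπne : ∀ x, π₁ x ≠ 0 := fun x => ne_of_gt (hπpos x)
  have h1πne : ∀ x, 1 - π₁ x ≠ 0 := fun x => ne_of_gt (h1πpos x)
  -- measurability
  have hτm : Measurable (fun x => μ₁ x - μ₀ x) := hμ₁m.sub hμ₀m
  have hm_pos : MeasurableSet {x | 0 < μ₁ x - μ₀ x} := measurableSet_lt measurable_const hτm
  have hm_neg : MeasurableSet {x | μ₁ x - μ₀ x < 0} := measurableSet_lt hτm measurable_const
  have hm_zero : MeasurableSet {x | μ₁ x - μ₀ x = 0} := measurableSet_eq_fun hτm measurable_const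
  have hip : Measurable (fun x => if 0 < μ₁ x - μ₀ x then (1 : ℝ) else 0) :=
    Measurable.ite hm_pos measurable_const measurable_const
  have hin : Measurable (fun x => if μ₁ x - μ₀ x < 0 then (1 : ℝ) else 0) :=
    Measurable.ite hm_neg measurable_const measurable_const
  have hiz : Measurable (fun x => if μ₁ x - μ₀ x = 0 then (1 : ℝ) else 0) :=
    Measurable.ite hm_zero measurable_const measurable_const
  have hDtm : Measurable Dt := by
    have hfe : Dt = fun x => (if 0 < μ₁ x - μ₀ x then (1 : ℝ) else 0)
        + t₀ * (if μ₁ x - μ₀ x = 0 then (1 : ℝ) else 0) := funext hDt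
    rw [hfe]; exact hip.add (measurable_const.mul hiz)
  -- values of Dt
  have hDt_pos : ∀ x, 0 < μ₁ x - μ₀ x → Dt x = 1 := fun x h => by
    rw [hDt x, if_pos h, if_neg (by linarith)]; ring
  have hDt_zero : ∀ x, μ₁ x - μ₀ x = 0 → Dt x = t₀ := fun x h => by
    rw [hDt x, if_neg (by simp [h]), if_pos h]; ring
  have hDt_neg : ∀ x, μ₁ x - μ₀ x < 0 → Dt x = 0 := fun x h => by
    rw [hDt x, if_neg (by linarith), if_neg (by linarith)]; ring
  have hDt01 : ∀ x, 0 ≤ Dt x ∧ Dt x ≤ 1 := fun x => by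
    rcases lt_trichotomy (μ₁ x - μ₀ x) 0 with h | h | h
    · rw [hDt_neg x h]; norm_num
    · rw [hDt_zero x h]; exact ⟨ht₀0, ht₀1⟩
    · rw [hDt_pos x h]; norm_num
  -- f₁, f₀, G
  set f₁ : 𝒳 → ℝ := fun x => Dt x / π₁ x with hf₁def
  set f₀ : 𝒳 → ℝ := fun x => (1 - Dt x) / (1 - π₁ x) with hf₀def
  set G : 𝒳 → ℝ := fun x => Dt x * μ₁ x + (1 - Dt x) * μ₀ x with hGdef
  have hf₁m : Measurable f₁ := hDtm.div hπ₁m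
  have hf₀m : Measurable f₀ := (measurable_const.sub hDtm).div (measurable_const.sub hπ₁m)
  have hGm : Measurable G := (hDtm.mul hμ₁m).add ((measurable_const.sub hDtm).mul hμ₀m)
  have hf₁b : ∀ x, |f₁ x| ≤ 1 / c := fun x => by
    rw [hf₁def, abs_of_nonneg (div_nonneg (hDt01 x).1 (hπpos x).le)]
    exact div_le_div₀ zero_le_one (hDt01 x).2 hc0 (hπc x)
  have hf₀b : ∀ x, |f₀ x| ≤ 1 / c := fun x => by
    rw [hf₀def, abs_of_nonneg (div_nonneg (by linarith [(hDt01 x).2]) (h1πpos x).le)]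
    exact div_le_div₀ zero_le_one (by linarith [(hDt01 x).1]) hc0 (h1πc x)
  have hc1 : (0:ℝ) < 1 / c := by positivity
  -- G is L²
  have hGb : ∀ x, |G x| ≤ |μ₁ x| + |μ₀ x| := fun x => by
    rw [hGdef]
    calc |Dt x * μ₁ x + (1 - Dt x) * μ₀ x| ≤ |Dt x * μ₁ x| + |(1 - Dt x) * μ₀ x| := abs_add_le _ _
      _ ≤ |μ₁ x| + |μ₀ x| := by
          rw [abs_mul, abs_mul, abs_of_nonneg (hDt01 x).1,
            abs_of_nonneg (by linarith [(hDt01 x).2] : (0:ℝ) ≤ 1 - Dt x)]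
          have h1 := abs_nonneg (μ₁ x); have h0 := abs_nonneg (μ₀ x)
          nlinarith [(hDt01 x).1, (hDt01 x).2]
  have hGL2 : MemLp (fun ω => G (X ω)) 2 P := by
    refine MemLp.of_le (hμ₁L2.norm.add hμ₀L2.norm) ((hGm.comp hX).aestronglyMeasurable)
      (ae_of_all _ fun ω => ?_)
    have := hGb (X ω)
    simp only [Real.norm_eq_abs, Pi.add_apply]
    rw [abs_of_nonneg (by positivity : (0:ℝ) ≤ |μ₁ (X ω)| + |μ₀ (X ω)|)]
    exact this
  -- basic integrability
  have hYint : Integrable Y P := hYL2.integrable one_le_two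
  have hY2 : Integrable (fun ω => Y ω ^ 2) P := hYL2.integrable_sq
  have hAb : ∀ ω, |A ω| ≤ 1 := fun ω => by rcases hAbin ω with h | h <;> simp [h]
  have h1Ab : ∀ ω, |1 - A ω| ≤ 1 := fun ω => by rcases hAbin ω with h | h <;> simp [h]
  have h1Aint : Integrable (fun ω => 1 - A ω) P := by
    refine Integrable.mono' (integrable_const 1) (measurable_const.sub hA).aestronglyMeasurable
      (ae_of_all _ fun ω => ?_)
    simpa [Real.norm_eq_abs] using h1Ab ω
  have hAint : Integrable A P := by
    refine Integrable.mono' (integrable_const 1) hA.aestronglyMeasurable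
      (ae_of_all _ fun ω => ?_)
    simpa [Real.norm_eq_abs] using hAb ω
  have hAY : Integrable (fun ω => A ω * Y ω) P :=
    int_bdd_mul hYint hA.aestronglyMeasurable 1 hAb
  have h1AY : Integrable (fun ω => (1 - A ω) * Y ω) P :=
    int_bdd_mul hYint (measurable_const.sub hA).aestronglyMeasurable 1 h1Ab
  have hAY2 : Integrable (fun ω => A ω * Y ω ^ 2) P :=
    int_bdd_mul hY2 hA.aestronglyMeasurable 1 hAb
  have h1AY2 : Integrable (fun ω => (1 - A ω) * Y ω ^ 2) P :=
    int_bdd_mul hY2 (measurable_const.sub hA).aestronglyMeasurable 1 h1Ab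
  have hμ₁sq : Integrable (fun ω => μ₁ (X ω) ^ 2) P := hμ₁L2.integrable_sq
  have hμ₀sq : Integrable (fun ω => μ₀ (X ω) ^ 2) P := hμ₀L2.integrable_sq
  -- conditional expectation of 1 - A
  have hcond1mA : P[(fun ω => 1 - A ω) | MeasurableSpace.comap X inferInstance]
      =ᵐ[P] fun ω => 1 - π₁ (X ω) := by
    have hfe : (fun ω => 1 - A ω) = (fun _ : Ω => (1:ℝ)) - A := rfl
    rw [hfe]
    have hs := condExp_sub (μ := P) (m := MeasurableSpace.comap X inferInstance)
      (integrable_const (1:ℝ)) hAint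
    have hcc : P[(fun _ : Ω => (1:ℝ)) | MeasurableSpace.comap X inferInstance]
        = fun _ => (1:ℝ) := condExp_const hX.comap_le 1
    filter_upwards [hs, hcondA] with ω h1 h2
    rw [h1]
    simp only [Pi.sub_apply, hcc, h2]
  -- generic vanishing of the augmentation terms
  have zero1 : ∀ (φ ℓ : 𝒳 → ℝ), Measurable φ → (∀ x, |φ x| ≤ 1 / c) → Measurable ℓ →
      MemLp (fun ω => ℓ (X ω)) 2 P →
      ∫ ω, φ (X ω) * ℓ (X ω) * (A ω * (Y ω - μ₁ (X ω))) ∂P = 0 := by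
    intro φ ℓ hφ hφb hℓ hℓ2
    have hℓY : Integrable (fun ω => ℓ (X ω) * Y ω) P := L2mul' hℓ2 hYL2
    have hℓμ : Integrable (fun ω => ℓ (X ω) * μ₁ (X ω)) P := L2mul' hℓ2 hμ₁L2
    have hmφA : AEStronglyMeasurable (fun ω => φ (X ω) * A ω) P :=
      ((hφ.comp hX).mul hA).aestronglyMeasurable
    have hbφA : ∀ ω, |φ (X ω) * A ω| ≤ 1 / c := fun ω => by
      rw [abs_mul]
      calc |φ (X ω)| * |A ω| ≤ (1 / c) * 1 :=
        mul_le_mul (hφb _) (hAb ω) (abs_nonneg _) hc1.le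
      _ = 1 / c := mul_one _
    have I1 : Integrable (fun ω => φ (X ω) * ℓ (X ω) * (A ω * Y ω)) P :=
      (int_bdd_mul hℓY hmφA _ hbφA).congr (ae_of_all _ fun ω => by ring)
    have I2 : Integrable (fun ω => φ (X ω) * ℓ (X ω) * μ₁ (X ω) * A ω) P :=
      (int_bdd_mul hℓμ hmφA _ hbφA).congr (ae_of_all _ fun ω => by ring)
    have k1 : ∫ ω, φ (X ω) * ℓ (X ω) * (A ω * Y ω) ∂P
        = ∫ ω, φ (X ω) * ℓ (X ω) * (μ₁ (X ω) * π₁ (X ω)) ∂P :=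
      key_integral P X hX (fun x => φ x * ℓ x) (fun x => μ₁ x * π₁ x)
        (hφ.mul hℓ) (fun ω => A ω * Y ω) hAY I1 hcond1
    have k2 : ∫ ω, φ (X ω) * ℓ (X ω) * μ₁ (X ω) * A ω ∂P
        = ∫ ω, φ (X ω) * ℓ (X ω) * μ₁ (X ω) * π₁ (X ω) ∂P :=
      key_integral P X hX (fun x => φ x * ℓ x * μ₁ x) π₁
        ((hφ.mul hℓ).mul hμ₁m) A hAint I2 hcondA
    have expand : ∫ ω, φ (X ω) * ℓ (X ω) * (A ω * (Y ω - μ₁ (X ω))) ∂P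
        = ∫ ω, φ (X ω) * ℓ (X ω) * (A ω * Y ω) ∂P
          - ∫ ω, φ (X ω) * ℓ (X ω) * μ₁ (X ω) * A ω ∂P := by
      rw [← integral_sub I1 I2]
      exact integral_congr_ae (ae_of_all _ fun ω => by ring)
    rw [expand, k1, k2, sub_eq_zero]
    exact integral_congr_ae (ae_of_all _ fun ω => by ring)
  have zero0 : ∀ (φ ℓ : 𝒳 → ℝ), Measurable φ → (∀ x, |φ x| ≤ 1 / c) → Measurable ℓ →
      MemLp (fun ω => ℓ (X ω)) 2 P →
      ∫ ω, φ (X ω) * ℓ (X ω) * ((1 - A ω) * (Y ω - μ₀ (X ω))) ∂P = 0 := by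
    intro φ ℓ hφ hφb hℓ hℓ2
    have hℓY : Integrable (fun ω => ℓ (X ω) * Y ω) P := L2mul' hℓ2 hYL2
    have hℓμ : Integrable (fun ω => ℓ (X ω) * μ₀ (X ω)) P := L2mul' hℓ2 hμ₀L2
    have hmφA : AEStronglyMeasurable (fun ω => φ (X ω) * (1 - A ω)) P :=
      ((hφ.comp hX).mul (measurable_const.sub hA)).aestronglyMeasurable
    have hbφA : ∀ ω, |φ (X ω) * (1 - A ω)| ≤ 1 / c := fun ω => by
      rw [abs_mul]
      calc |φ (X ω)| * |1 - A ω| ≤ (1 / c) * 1 :=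
        mul_le_mul (hφb _) (h1Ab ω) (abs_nonneg _) hc1.le
      _ = 1 / c := mul_one _
    have I1 : Integrable (fun ω => φ (X ω) * ℓ (X ω) * ((1 - A ω) * Y ω)) P :=
      (int_bdd_mul hℓY hmφA _ hbφA).congr (ae_of_all _ fun ω => by ring)
    have I2 : Integrable (fun ω => φ (X ω) * ℓ (X ω) * μ₀ (X ω) * (1 - A ω)) P :=
      (int_bdd_mul hℓμ hmφA _ hbφA).congr (ae_of_all _ fun ω => by ring)
    have k1 : ∫ ω, φ (X ω) * ℓ (X ω) * ((1 - A ω) * Y ω) ∂P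
        = ∫ ω, φ (X ω) * ℓ (X ω) * (μ₀ (X ω) * (1 - π₁ (X ω))) ∂P :=
      key_integral P X hX (fun x => φ x * ℓ x) (fun x => μ₀ x * (1 - π₁ x))
        (hφ.mul hℓ) (fun ω => (1 - A ω) * Y ω) h1AY I1 hcond0
    have k2 : ∫ ω, φ (X ω) * ℓ (X ω) * μ₀ (X ω) * (1 - A ω) ∂P
        = ∫ ω, φ (X ω) * ℓ (X ω) * μ₀ (X ω) * (1 - π₁ (X ω)) ∂P :=
      key_integral P X hX (fun x => φ x * ℓ x * μ₀ x) (fun x => 1 - π₁ x)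
        ((hφ.mul hℓ).mul hμ₀m) (fun ω => 1 - A ω) h1Aint I2 hcond1mA
    have expand : ∫ ω, φ (X ω) * ℓ (X ω) * ((1 - A ω) * (Y ω - μ₀ (X ω))) ∂P
        = ∫ ω, φ (X ω) * ℓ (X ω) * ((1 - A ω) * Y ω) ∂P
          - ∫ ω, φ (X ω) * ℓ (X ω) * μ₀ (X ω) * (1 - A ω) ∂P := by
      rw [← integral_sub I1 I2]
      exact integral_congr_ae (ae_of_all _ fun ω => by ring)
    rw [expand, k1, k2, sub_eq_zero]
    exact integral_congr_ae (ae_of_all _ fun ω => by ring)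
  -- generic second moment of the augmentation terms
  have sq1 : ∀ (φ : 𝒳 → ℝ), Measurable φ → (∀ x, |φ x| ≤ (1 / c) ^ 2) →
      ∫ ω, φ (X ω) * (A ω * (Y ω - μ₁ (X ω)) ^ 2) ∂P
        = ∫ ω, φ (X ω) * (σ₁sq (X ω) * π₁ (X ω)) ∂P := by
    intro φ hφ hφb
    have hmφ : AEStronglyMeasurable (fun ω => φ (X ω)) P := (hφ.comp hX).aestronglyMeasurable
    have hmφA : AEStronglyMeasurable (fun ω => φ (X ω) * A ω) P :=
      ((hφ.comp hX).mul hA).aestronglyMeasurable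
    have hbφA : ∀ ω, |φ (X ω) * A ω| ≤ (1 / c) ^ 2 := fun ω => by
      rw [abs_mul]
      calc |φ (X ω)| * |A ω| ≤ ((1 / c) ^ 2) * 1 :=
        mul_le_mul (hφb _) (hAb ω) (abs_nonneg _) (by positivity)
      _ = (1 / c) ^ 2 := mul_one _
    have I1 : Integrable (fun ω => φ (X ω) * (A ω * Y ω ^ 2)) P :=
      int_bdd_mul hAY2 hmφ _ (fun ω => hφb (X ω))
    have I2 : Integrable (fun ω => 2 * φ (X ω) * μ₁ (X ω) * (A ω * Y ω)) P := by
      have core : Integrable (fun ω => μ₁ (X ω) * Y ω) P := L2mul' hμ₁L2 hYL2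
      have hm2 : AEStronglyMeasurable (fun ω => 2 * φ (X ω) * A ω) P :=
        ((measurable_const.mul (hφ.comp hX)).mul hA).aestronglyMeasurable
      have hb2 : ∀ ω, |2 * φ (X ω) * A ω| ≤ 2 * (1 / c) ^ 2 := fun ω => by
        have : 2 * φ (X ω) * A ω = 2 * (φ (X ω) * A ω) := by ring
        rw [this, abs_mul, abs_two]
        exact mul_le_mul_of_nonneg_left (hbφA ω) (by norm_num)
      exact (int_bdd_mul core hm2 _ hb2).congr (ae_of_all _ fun ω => by ring)
    have I3 : Integrable (fun ω => φ (X ω) * μ₁ (X ω) ^ 2 * A ω) P :=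
      (int_bdd_mul hμ₁sq hmφA _ hbφA).congr (ae_of_all _ fun ω => by ring)
    have k1 : ∫ ω, φ (X ω) * (A ω * Y ω ^ 2) ∂P
        = ∫ ω, φ (X ω) * ((μ₁ (X ω) ^ 2 + σ₁sq (X ω)) * π₁ (X ω)) ∂P :=
      key_integral P X hX φ (fun x => (μ₁ x ^ 2 + σ₁sq x) * π₁ x) hφ
        (fun ω => A ω * Y ω ^ 2) hAY2 I1 hcondsq1
    have k2 : ∫ ω, 2 * φ (X ω) * μ₁ (X ω) * (A ω * Y ω) ∂P
        = ∫ ω, 2 * φ (X ω) * μ₁ (X ω) * (μ₁ (X ω) * π₁ (X ω)) ∂P :=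
      key_integral P X hX (fun x => 2 * φ x * μ₁ x) (fun x => μ₁ x * π₁ x)
        ((measurable_const.mul hφ).mul hμ₁m) (fun ω => A ω * Y ω) hAY I2 hcond1
    have k3 : ∫ ω, φ (X ω) * μ₁ (X ω) ^ 2 * A ω ∂P
        = ∫ ω, φ (X ω) * μ₁ (X ω) ^ 2 * π₁ (X ω) ∂P :=
      key_integral P X hX (fun x => φ x * μ₁ x ^ 2) π₁
        (hφ.mul (hμ₁m.pow_const 2)) A hAint I3 hcondA
    -- RHS-side integrabilities
    have hπb : ∀ x, |π₁ x| ≤ 1 := fun x => by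
      rw [abs_of_nonneg (hπpos x).le]; linarith [(hπ₁r x).2, hc0.le]
    have hmφπ : AEStronglyMeasurable (fun ω => φ (X ω) * π₁ (X ω)) P :=
      ((hφ.comp hX).mul (hπ₁m.comp hX)).aestronglyMeasurable
    have hbφπ : ∀ ω, |φ (X ω) * π₁ (X ω)| ≤ (1 / c) ^ 2 := fun ω => by
      rw [abs_mul]
      calc |φ (X ω)| * |π₁ (X ω)| ≤ ((1 / c) ^ 2) * 1 :=
        mul_le_mul (hφb _) (hπb _) (abs_nonneg _) (by positivity)
      _ = (1 / c) ^ 2 := mul_one _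
    have hμσ₁ : Integrable (fun ω => μ₁ (X ω) ^ 2 + σ₁sq (X ω)) P := hμ₁sq.add hσ₁L1
    have J1 : Integrable (fun ω => φ (X ω) * ((μ₁ (X ω) ^ 2 + σ₁sq (X ω)) * π₁ (X ω))) P :=
      (int_bdd_mul hμσ₁ hmφπ _ hbφπ).congr (ae_of_all _ fun ω => by ring)
    have J2 : Integrable (fun ω => 2 * φ (X ω) * μ₁ (X ω) * (μ₁ (X ω) * π₁ (X ω))) P := by
      have hm2 : AEStronglyMeasurable (fun ω => 2 * (φ (X ω) * π₁ (X ω))) P :=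
        (aestronglyMeasurable_const.mul hmφπ)
      have hb2 : ∀ ω, |2 * (φ (X ω) * π₁ (X ω))| ≤ 2 * (1 / c) ^ 2 := fun ω => by
        rw [abs_mul, abs_two]
        exact mul_le_mul_of_nonneg_left (hbφπ ω) (by norm_num)
      exact (int_bdd_mul hμ₁sq hm2 _ hb2).congr (ae_of_all _ fun ω => by ring)
    have J3 : Integrable (fun ω => φ (X ω) * μ₁ (X ω) ^ 2 * π₁ (X ω)) P :=
      (int_bdd_mul hμ₁sq hmφπ _ hbφπ).congr (ae_of_all _ fun ω => by ring)
    have IS : Integrable (fun ω => φ (X ω) * (A ω * Y ω ^ 2)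
        - 2 * φ (X ω) * μ₁ (X ω) * (A ω * Y ω)) P := I1.sub I2
    have JS : Integrable (fun ω => φ (X ω) * ((μ₁ (X ω) ^ 2 + σ₁sq (X ω)) * π₁ (X ω))
        - 2 * φ (X ω) * μ₁ (X ω) * (μ₁ (X ω) * π₁ (X ω))) P := J1.sub J2
    have expand : ∫ ω, φ (X ω) * (A ω * (Y ω - μ₁ (X ω)) ^ 2) ∂P
        = ∫ ω, φ (X ω) * (A ω * Y ω ^ 2) ∂P
          - ∫ ω, 2 * φ (X ω) * μ₁ (X ω) * (A ω * Y ω) ∂P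
          + ∫ ω, φ (X ω) * μ₁ (X ω) ^ 2 * A ω ∂P := by
      rw [← integral_sub I1 I2, ← integral_add IS I3]
      exact integral_congr_ae (ae_of_all _ fun ω => by ring)
    have collect : ∫ ω, φ (X ω) * ((μ₁ (X ω) ^ 2 + σ₁sq (X ω)) * π₁ (X ω)) ∂P
          - ∫ ω, 2 * φ (X ω) * μ₁ (X ω) * (μ₁ (X ω) * π₁ (X ω)) ∂P
          + ∫ ω, φ (X ω) * μ₁ (X ω) ^ 2 * π₁ (X ω) ∂P
        = ∫ ω, φ (X ω) * (σ₁sq (X ω) * π₁ (X ω)) ∂P := by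
      rw [← integral_sub J1 J2, ← integral_add JS J3]
      exact integral_congr_ae (ae_of_all _ fun ω => by ring)
    rw [expand, k1, k2, k3, collect]
  have sq0 : ∀ (φ : 𝒳 → ℝ), Measurable φ → (∀ x, |φ x| ≤ (1 / c) ^ 2) →
      ∫ ω, φ (X ω) * ((1 - A ω) * (Y ω - μ₀ (X ω)) ^ 2) ∂P
        = ∫ ω, φ (X ω) * (σ₀sq (X ω) * (1 - π₁ (X ω))) ∂P := by
    intro φ hφ hφb
    have hmφ : AEStronglyMeasurable (fun ω => φ (X ω)) P := (hφ.comp hX).aestronglyMeasurable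
    have hmφA : AEStronglyMeasurable (fun ω => φ (X ω) * (1 - A ω)) P :=
      ((hφ.comp hX).mul (measurable_const.sub hA)).aestronglyMeasurable
    have hbφA : ∀ ω, |φ (X ω) * (1 - A ω)| ≤ (1 / c) ^ 2 := fun ω => by
      rw [abs_mul]
      calc |φ (X ω)| * |1 - A ω| ≤ ((1 / c) ^ 2) * 1 :=
        mul_le_mul (hφb _) (h1Ab ω) (abs_nonneg _) (by positivity)
      _ = (1 / c) ^ 2 := mul_one _
    have I1 : Integrable (fun ω => φ (X ω) * ((1 - A ω) * Y ω ^ 2)) P :=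
      int_bdd_mul h1AY2 hmφ _ (fun ω => hφb (X ω))
    have I2 : Integrable (fun ω => 2 * φ (X ω) * μ₀ (X ω) * ((1 - A ω) * Y ω)) P := by
      have core : Integrable (fun ω => μ₀ (X ω) * Y ω) P := L2mul' hμ₀L2 hYL2
      have hm2 : AEStronglyMeasurable (fun ω => 2 * φ (X ω) * (1 - A ω)) P :=
        ((measurable_const.mul (hφ.comp hX)).mul (measurable_const.sub hA)).aestronglyMeasurable
      have hb2 : ∀ ω, |2 * φ (X ω) * (1 - A ω)| ≤ 2 * (1 / c) ^ 2 := fun ω => by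
        have : 2 * φ (X ω) * (1 - A ω) = 2 * (φ (X ω) * (1 - A ω)) := by ring
        rw [this, abs_mul, abs_two]
        exact mul_le_mul_of_nonneg_left (hbφA ω) (by norm_num)
      exact (int_bdd_mul core hm2 _ hb2).congr (ae_of_all _ fun ω => by ring)
    have I3 : Integrable (fun ω => φ (X ω) * μ₀ (X ω) ^ 2 * (1 - A ω)) P :=
      (int_bdd_mul hμ₀sq hmφA _ hbφA).congr (ae_of_all _ fun ω => by ring)
    have k1 : ∫ ω, φ (X ω) * ((1 - A ω) * Y ω ^ 2) ∂P
        = ∫ ω, φ (X ω) * ((μ₀ (X ω) ^ 2 + σ₀sq (X ω)) * (1 - π₁ (X ω))) ∂P :=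
      key_integral P X hX φ (fun x => (μ₀ x ^ 2 + σ₀sq x) * (1 - π₁ x)) hφ
        (fun ω => (1 - A ω) * Y ω ^ 2) h1AY2 I1 hcondsq0
    have k2 : ∫ ω, 2 * φ (X ω) * μ₀ (X ω) * ((1 - A ω) * Y ω) ∂P
        = ∫ ω, 2 * φ (X ω) * μ₀ (X ω) * (μ₀ (X ω) * (1 - π₁ (X ω))) ∂P :=
      key_integral P X hX (fun x => 2 * φ x * μ₀ x) (fun x => μ₀ x * (1 - π₁ x))
        ((measurable_const.mul hφ).mul hμ₀m) (fun ω => (1 - A ω) * Y ω) h1AY I2 hcond0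
    have k3 : ∫ ω, φ (X ω) * μ₀ (X ω) ^ 2 * (1 - A ω) ∂P
        = ∫ ω, φ (X ω) * μ₀ (X ω) ^ 2 * (1 - π₁ (X ω)) ∂P :=
      key_integral P X hX (fun x => φ x * μ₀ x ^ 2) (fun x => 1 - π₁ x)
        (hφ.mul (hμ₀m.pow_const 2)) (fun ω => 1 - A ω) h1Aint I3 hcond1mA
    have h1πb : ∀ x, |1 - π₁ x| ≤ 1 := fun x => by
      rw [abs_of_nonneg (h1πpos x).le]; linarith [(hπ₁r x).1, hc0.le]
    have hmφπ : AEStronglyMeasurable (fun ω => φ (X ω) * (1 - π₁ (X ω))) P :=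
      ((hφ.comp hX).mul (measurable_const.sub (hπ₁m.comp hX))).aestronglyMeasurable
    have hbφπ : ∀ ω, |φ (X ω) * (1 - π₁ (X ω))| ≤ (1 / c) ^ 2 := fun ω => by
      rw [abs_mul]
      calc |φ (X ω)| * |1 - π₁ (X ω)| ≤ ((1 / c) ^ 2) * 1 :=
        mul_le_mul (hφb _) (h1πb _) (abs_nonneg _) (by positivity)
      _ = (1 / c) ^ 2 := mul_one _
    have hμσ₀ : Integrable (fun ω => μ₀ (X ω) ^ 2 + σ₀sq (X ω)) P := hμ₀sq.add hσ₀L1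
    have J1 : Integrable (fun ω => φ (X ω) * ((μ₀ (X ω) ^ 2 + σ₀sq (X ω)) * (1 - π₁ (X ω)))) P :=
      (int_bdd_mul hμσ₀ hmφπ _ hbφπ).congr (ae_of_all _ fun ω => by ring)
    have J2 : Integrable (fun ω => 2 * φ (X ω) * μ₀ (X ω) * (μ₀ (X ω) * (1 - π₁ (X ω)))) P := by
      have hm2 : AEStronglyMeasurable (fun ω => 2 * (φ (X ω) * (1 - π₁ (X ω)))) P :=
        (aestronglyMeasurable_const.mul hmφπ)
      have hb2 : ∀ ω, |2 * (φ (X ω) * (1 - π₁ (X ω)))| ≤ 2 * (1 / c) ^ 2 := fun ω => by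
        rw [abs_mul, abs_two]
        exact mul_le_mul_of_nonneg_left (hbφπ ω) (by norm_num)
      exact (int_bdd_mul hμ₀sq hm2 _ hb2).congr (ae_of_all _ fun ω => by ring)
    have J3 : Integrable (fun ω => φ (X ω) * μ₀ (X ω) ^ 2 * (1 - π₁ (X ω))) P :=
      (int_bdd_mul hμ₀sq hmφπ _ hbφπ).congr (ae_of_all _ fun ω => by ring)
    have IS : Integrable (fun ω => φ (X ω) * ((1 - A ω) * Y ω ^ 2)
        - 2 * φ (X ω) * μ₀ (X ω) * ((1 - A ω) * Y ω)) P := I1.sub I2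
    have JS : Integrable (fun ω => φ (X ω) * ((μ₀ (X ω) ^ 2 + σ₀sq (X ω)) * (1 - π₁ (X ω)))
        - 2 * φ (X ω) * μ₀ (X ω) * (μ₀ (X ω) * (1 - π₁ (X ω)))) P := J1.sub J2
    have expand : ∫ ω, φ (X ω) * ((1 - A ω) * (Y ω - μ₀ (X ω)) ^ 2) ∂P
        = ∫ ω, φ (X ω) * ((1 - A ω) * Y ω ^ 2) ∂P
          - ∫ ω, 2 * φ (X ω) * μ₀ (X ω) * ((1 - A ω) * Y ω) ∂P
          + ∫ ω, φ (X ω) * μ₀ (X ω) ^ 2 * (1 - A ω) ∂P := by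
      rw [← integral_sub I1 I2, ← integral_add IS I3]
      exact integral_congr_ae (ae_of_all _ fun ω => by ring)
    have collect : ∫ ω, φ (X ω) * ((μ₀ (X ω) ^ 2 + σ₀sq (X ω)) * (1 - π₁ (X ω))) ∂P
          - ∫ ω, 2 * φ (X ω) * μ₀ (X ω) * (μ₀ (X ω) * (1 - π₁ (X ω))) ∂P
          + ∫ ω, φ (X ω) * μ₀ (X ω) ^ 2 * (1 - π₁ (X ω)) ∂P
        = ∫ ω, φ (X ω) * (σ₀sq (X ω) * (1 - π₁ (X ω))) ∂P := by
      rw [← integral_sub J1 J2, ← integral_add JS J3]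
      exact integral_congr_ae (ae_of_all _ fun ω => by ring)
    rw [expand, k1, k2, k3, collect]
  -- the residual term
  set R : Ω → ℝ := fun ω => A ω * f₁ (X ω) * (Y ω - μ₁ (X ω))
      + (1 - A ω) * f₀ (X ω) * (Y ω - μ₀ (X ω)) with hRdef
  have hmf₁X : AEStronglyMeasurable (fun ω => f₁ (X ω)) P := (hf₁m.comp hX).aestronglyMeasurable
  have hmf₀X : AEStronglyMeasurable (fun ω => f₀ (X ω)) P := (hf₀m.comp hX).aestronglyMeasurable
  have hmf₁A : AEStronglyMeasurable (fun ω => f₁ (X ω) * A ω) P :=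
    ((hf₁m.comp hX).mul hA).aestronglyMeasurable
  have hmf₀A : AEStronglyMeasurable (fun ω => f₀ (X ω) * (1 - A ω)) P :=
    ((hf₀m.comp hX).mul (measurable_const.sub hA)).aestronglyMeasurable
  have hmf₁sqA : AEStronglyMeasurable (fun ω => f₁ (X ω) ^ 2 * A ω) P :=
    (((hf₁m.comp hX).pow_const 2).mul hA).aestronglyMeasurable
  have hmf₀sqA : AEStronglyMeasurable (fun ω => f₀ (X ω) ^ 2 * (1 - A ω)) P :=
    (((hf₀m.comp hX).pow_const 2).mul (measurable_const.sub hA)).aestronglyMeasurable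
  have hmf₁sqπ : AEStronglyMeasurable (fun ω => f₁ (X ω) ^ 2 * π₁ (X ω)) P :=
    (((hf₁m.comp hX).pow_const 2).mul (hπ₁m.comp hX)).aestronglyMeasurable
  have hmf₀sqπ : AEStronglyMeasurable (fun ω => f₀ (X ω) ^ 2 * (1 - π₁ (X ω))) P :=
    (((hf₀m.comp hX).pow_const 2).mul (measurable_const.sub (hπ₁m.comp hX))).aestronglyMeasurable
  have hmf₁G : AEStronglyMeasurable (fun ω => f₁ (X ω) * A ω) P := hmf₁A
  have hRm : Measurable R := ((hA.mul (hf₁m.comp hX)).mul (hY.sub (hμ₁m.comp hX))).add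
      (((measurable_const.sub hA).mul (hf₀m.comp hX)).mul (hY.sub (hμ₀m.comp hX)))
  have hψ : aipw X A Y Dt π₁ μ₁ μ₀ = fun ω => G (X ω) + R ω := by
    funext ω
    rcases hAbin ω with h | h
    · simp only [aipw, hRdef, hGdef, hf₁def, hf₀def, h]; ring
    · simp only [aipw, hRdef, hGdef, hf₁def, hf₀def, h]; ring
  -- L² facts for the residual
  have hYμ₁ : MemLp (fun ω => Y ω - μ₁ (X ω)) 2 P := hYL2.sub hμ₁L2
  have hYμ₀ : MemLp (fun ω => Y ω - μ₀ (X ω)) 2 P := hYL2.sub hμ₀L2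
  have hsq1int : Integrable (fun ω => (Y ω - μ₁ (X ω)) ^ 2) P := hYμ₁.integrable_sq
  have hsq0int : Integrable (fun ω => (Y ω - μ₀ (X ω)) ^ 2) P := hYμ₀.integrable_sq
  have hf₁sqb : ∀ x, |f₁ x ^ 2| ≤ (1 / c) ^ 2 := fun x => by
    rw [abs_pow]; exact pow_le_pow_left₀ (abs_nonneg _) (hf₁b x) 2
  have hf₀sqb : ∀ x, |f₀ x ^ 2| ≤ (1 / c) ^ 2 := fun x => by
    rw [abs_pow]; exact pow_le_pow_left₀ (abs_nonneg _) (hf₀b x) 2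
  have hbf₁A : ∀ ω, |f₁ (X ω) ^ 2 * A ω| ≤ (1 / c) ^ 2 := fun ω => by
    rw [abs_mul]
    calc |f₁ (X ω) ^ 2| * |A ω| ≤ (1 / c) ^ 2 * 1 :=
      mul_le_mul (hf₁sqb _) (hAb ω) (abs_nonneg _) (by positivity)
    _ = (1 / c) ^ 2 := mul_one _
  have hbf₀A : ∀ ω, |f₀ (X ω) ^ 2 * (1 - A ω)| ≤ (1 / c) ^ 2 := fun ω => by
    rw [abs_mul]
    calc |f₀ (X ω) ^ 2| * |1 - A ω| ≤ (1 / c) ^ 2 * 1 :=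
      mul_le_mul (hf₀sqb _) (h1Ab ω) (abs_nonneg _) (by positivity)
    _ = (1 / c) ^ 2 := mul_one _
  have IA : Integrable (fun ω => f₁ (X ω) ^ 2 * (A ω * (Y ω - μ₁ (X ω)) ^ 2)) P :=
    (int_bdd_mul hsq1int hmf₁sqA _ hbf₁A).congr (ae_of_all _ fun ω => by ring)
  have IB : Integrable (fun ω => f₀ (X ω) ^ 2 * ((1 - A ω) * (Y ω - μ₀ (X ω)) ^ 2)) P :=
    (int_bdd_mul hsq0int hmf₀sqA _ hbf₀A).congr (ae_of_all _ fun ω => by ring)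
  have hR2 : ∀ ω, R ω ^ 2 = f₁ (X ω) ^ 2 * (A ω * (Y ω - μ₁ (X ω)) ^ 2)
      + f₀ (X ω) ^ 2 * ((1 - A ω) * (Y ω - μ₀ (X ω)) ^ 2) := fun ω => by
    rcases hAbin ω with h | h <;> simp only [hRdef, h] <;> ring
  have hR2int : Integrable (fun ω => R ω ^ 2) P :=
    (IA.add IB).congr (ae_of_all _ fun ω => (hR2 ω).symm)
  have hRL2 : MemLp R 2 P :=
    (memLp_two_iff_integrable_sq hRm.aestronglyMeasurable).mpr hR2int
  have hRint : Integrable R P := hRL2.integrable one_le_two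
  have hGXint : Integrable (fun ω => G (X ω)) P := hGL2.integrable one_le_two
  have hGsqint : Integrable (fun ω => G (X ω) ^ 2) P := hGL2.integrable_sq
  have hGR : Integrable (fun ω => G (X ω) * R ω) P := L2mul' hGL2 hRL2
  -- mean of the residual is zero
  have hAYμ₁ : Integrable (fun ω => A ω * (Y ω - μ₁ (X ω))) P :=
    int_bdd_mul (hYμ₁.integrable one_le_two) hA.aestronglyMeasurable 1 hAb
  have h1AYμ₀ : Integrable (fun ω => (1 - A ω) * (Y ω - μ₀ (X ω))) P :=
    int_bdd_mul (hYμ₀.integrable one_le_two)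
      (measurable_const.sub hA).aestronglyMeasurable 1 h1Ab
  have ER : ∫ ω, R ω ∂P = 0 := by
    have one2 : MemLp (fun ω : Ω => (1 : ℝ)) 2 P := memLp_const 1
    have z1 : ∫ ω, f₁ (X ω) * 1 * (A ω * (Y ω - μ₁ (X ω))) ∂P = 0 :=
      zero1 f₁ (fun _ => 1) hf₁m hf₁b measurable_const one2
    have z0 : ∫ ω, f₀ (X ω) * 1 * ((1 - A ω) * (Y ω - μ₀ (X ω))) ∂P = 0 :=
      zero0 f₀ (fun _ => 1) hf₀m hf₀b measurable_const one2
    have i1 : Integrable (fun ω => f₁ (X ω) * 1 * (A ω * (Y ω - μ₁ (X ω)))) P :=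
      (int_bdd_mul hAYμ₁ hmf₁X (1 / c)
        (fun ω => hf₁b (X ω))).congr (ae_of_all _ fun ω => by ring)
    have i0 : Integrable (fun ω => f₀ (X ω) * 1 * ((1 - A ω) * (Y ω - μ₀ (X ω)))) P :=
      (int_bdd_mul h1AYμ₀ hmf₀X (1 / c)
        (fun ω => hf₀b (X ω))).congr (ae_of_all _ fun ω => by ring)
    have hsum : ∫ ω, R ω ∂P
        = ∫ ω, f₁ (X ω) * 1 * (A ω * (Y ω - μ₁ (X ω))) ∂P
          + ∫ ω, f₀ (X ω) * 1 * ((1 - A ω) * (Y ω - μ₀ (X ω))) ∂P := by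
      rw [← integral_add i1 i0]
      exact integral_congr_ae (ae_of_all _ fun ω => by simp only [hRdef]; ring)
    rw [hsum, z1, z0, add_zero]
  -- mean of G(X) times the residual is zero
  have EGR : ∫ ω, G (X ω) * R ω ∂P = 0 := by
    have z1 := zero1 f₁ G hf₁m hf₁b hGm hGL2
    have z0 := zero0 f₀ G hf₀m hf₀b hGm hGL2
    have hbf₁A' : ∀ ω, |f₁ (X ω) * A ω| ≤ 1 / c := fun ω => by
      rw [abs_mul]
      calc |f₁ (X ω)| * |A ω| ≤ (1 / c) * 1 :=
        mul_le_mul (hf₁b _) (hAb ω) (abs_nonneg _) hc1.le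
      _ = 1 / c := mul_one _
    have hbf₀A' : ∀ ω, |f₀ (X ω) * (1 - A ω)| ≤ 1 / c := fun ω => by
      rw [abs_mul]
      calc |f₀ (X ω)| * |1 - A ω| ≤ (1 / c) * 1 :=
        mul_le_mul (hf₀b _) (h1Ab ω) (abs_nonneg _) hc1.le
      _ = 1 / c := mul_one _
    have i1 : Integrable (fun ω => f₁ (X ω) * G (X ω) * (A ω * (Y ω - μ₁ (X ω)))) P :=
      (int_bdd_mul (L2mul' hGL2 hYμ₁) hmf₁A _ hbf₁A').congr
        (ae_of_all _ fun ω => by ring)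
    have i0 : Integrable (fun ω => f₀ (X ω) * G (X ω) * ((1 - A ω) * (Y ω - μ₀ (X ω)))) P :=
      (int_bdd_mul (L2mul' hGL2 hYμ₀) hmf₀A _ hbf₀A').congr
        (ae_of_all _ fun ω => by ring)
    have hsum : ∫ ω, G (X ω) * R ω ∂P
        = ∫ ω, f₁ (X ω) * G (X ω) * (A ω * (Y ω - μ₁ (X ω))) ∂P
          + ∫ ω, f₀ (X ω) * G (X ω) * ((1 - A ω) * (Y ω - μ₀ (X ω))) ∂P := by
      rw [← integral_add i1 i0]
      exact integral_congr_ae (ae_of_all _ fun ω => by simp only [hRdef]; ring)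
    rw [hsum, z1, z0, add_zero]
  -- second moment of the residual
  have ER2 : ∫ ω, R ω ^ 2 ∂P
      = ∫ ω, f₁ (X ω) ^ 2 * (σ₁sq (X ω) * π₁ (X ω)) ∂P
        + ∫ ω, f₀ (X ω) ^ 2 * (σ₀sq (X ω) * (1 - π₁ (X ω))) ∂P := by
    have s1 := sq1 (fun x => f₁ x ^ 2) (hf₁m.pow_const 2) hf₁sqb
    have s0 := sq0 (fun x => f₀ x ^ 2) (hf₀m.pow_const 2) hf₀sqb
    have hsum : ∫ ω, R ω ^ 2 ∂P
        = ∫ ω, f₁ (X ω) ^ 2 * (A ω * (Y ω - μ₁ (X ω)) ^ 2) ∂P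
          + ∫ ω, f₀ (X ω) ^ 2 * ((1 - A ω) * (Y ω - μ₀ (X ω)) ^ 2) ∂P := by
      rw [← integral_add IA IB]
      exact integral_congr_ae (ae_of_all _ fun ω => hR2 ω)
    rw [hsum, s1, s0]
  -- integrability of the target integrands
  have hbip : ∀ x, |(if 0 < μ₁ x - μ₀ x then (1:ℝ) else 0) / π₁ x| ≤ 1 / c := fun x => by
    rw [abs_div, abs_of_nonneg (hπpos x).le]
    exact div_le_div₀ (by norm_num) (by split_ifs <;> norm_num) hc0 (hπc x)
  have hbin : ∀ x, |(if μ₁ x - μ₀ x < 0 then (1:ℝ) else 0) / (1 - π₁ x)| ≤ 1 / c := fun x => by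
    rw [abs_div, abs_of_nonneg (h1πpos x).le]
    exact div_le_div₀ (by norm_num) (by split_ifs <;> norm_num) hc0 (h1πc x)
  have hbz1 : ∀ x, |t₀ ^ 2 * (if μ₁ x - μ₀ x = 0 then (1:ℝ) else 0) / π₁ x| ≤ 1 / c := fun x => by
    rw [abs_div, abs_of_nonneg (hπpos x).le]
    refine div_le_div₀ (by norm_num) ?_ hc0 (hπc x)
    split_ifs with h
    · rw [mul_one, abs_of_nonneg (by positivity : (0:ℝ) ≤ t₀ ^ 2)]; nlinarith
    · rw [mul_zero, abs_zero]; norm_num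
  have hbz0 : ∀ x, |(1 - t₀) ^ 2 * (if μ₁ x - μ₀ x = 0 then (1:ℝ) else 0) / (1 - π₁ x)| ≤ 1 / c :=
    fun x => by
    rw [abs_div, abs_of_nonneg (h1πpos x).le]
    refine div_le_div₀ (by norm_num) ?_ hc0 (h1πc x)
    split_ifs with h
    · rw [mul_one, abs_of_nonneg (by positivity : (0:ℝ) ≤ (1 - t₀) ^ 2)]; nlinarith
    · rw [mul_zero, abs_zero]; norm_num
  have it1 : Integrable (fun ω => (if 0 < μ₁ (X ω) - μ₀ (X ω) then (1 : ℝ) else 0)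
      * σ₁sq (X ω) / π₁ (X ω)
      + (if μ₁ (X ω) - μ₀ (X ω) < 0 then (1 : ℝ) else 0) * σ₀sq (X ω) / (1 - π₁ (X ω))) P := by
    have p1 : Integrable (fun ω => (if 0 < μ₁ (X ω) - μ₀ (X ω) then (1 : ℝ) else 0)
        * σ₁sq (X ω) / π₁ (X ω)) P :=
      (int_bdd_mul hσ₁L1 (f := fun ω => (if 0 < μ₁ (X ω) - μ₀ (X ω) then (1:ℝ) else 0) / π₁ (X ω))
        (((hip.div hπ₁m).comp hX).aestronglyMeasurable) (1 / c)
        (fun ω => hbip (X ω))).congr (ae_of_all _ fun ω => by ring)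
    have p0 : Integrable (fun ω => (if μ₁ (X ω) - μ₀ (X ω) < 0 then (1 : ℝ) else 0)
        * σ₀sq (X ω) / (1 - π₁ (X ω))) P :=
      (int_bdd_mul hσ₀L1 (f := fun ω => (if μ₁ (X ω) - μ₀ (X ω) < 0 then (1:ℝ) else 0) / (1 - π₁ (X ω)))
        (((hin.div (measurable_const.sub hπ₁m)).comp hX).aestronglyMeasurable)
        (1 / c) (fun ω => hbin (X ω))).congr (ae_of_all _ fun ω => by ring)
    exact p1.add p0
  have it2 : Integrable (fun ω => (t₀ ^ 2 * σ₁sq (X ω) / π₁ (X ω)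
      + (1 - t₀) ^ 2 * σ₀sq (X ω) / (1 - π₁ (X ω)))
      * (if μ₁ (X ω) - μ₀ (X ω) = 0 then (1 : ℝ) else 0)) P := by
    have p1 : Integrable (fun ω => (t₀ ^ 2 * (if μ₁ (X ω) - μ₀ (X ω) = 0 then (1 : ℝ) else 0)
        / π₁ (X ω)) * σ₁sq (X ω)) P :=
      int_bdd_mul hσ₁L1 (f := fun ω => t₀ ^ 2 * (if μ₁ (X ω) - μ₀ (X ω) = 0 then (1:ℝ) else 0) / π₁ (X ω))
        ((((measurable_const.mul hiz).div hπ₁m).comp hX).aestronglyMeasurable)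
        (1 / c) (fun ω => hbz1 (X ω))
    have p0 : Integrable (fun ω => ((1 - t₀) ^ 2 * (if μ₁ (X ω) - μ₀ (X ω) = 0 then (1 : ℝ) else 0)
        / (1 - π₁ (X ω))) * σ₀sq (X ω)) P :=
      int_bdd_mul hσ₀L1 (f := fun ω => (1 - t₀) ^ 2 * (if μ₁ (X ω) - μ₀ (X ω) = 0 then (1:ℝ) else 0) / (1 - π₁ (X ω)))
        ((((measurable_const.mul hiz).div
        (measurable_const.sub hπ₁m)).comp hX).aestronglyMeasurable)
        (1 / c) (fun ω => hbz0 (X ω))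
    have psum : Integrable (fun ω => (t₀ ^ 2 * (if μ₁ (X ω) - μ₀ (X ω) = 0 then (1 : ℝ) else 0)
        / π₁ (X ω)) * σ₁sq (X ω)
        + ((1 - t₀) ^ 2 * (if μ₁ (X ω) - μ₀ (X ω) = 0 then (1 : ℝ) else 0)
        / (1 - π₁ (X ω))) * σ₀sq (X ω)) P := p1.add p0
    exact psum.congr (ae_of_all _ fun ω => by ring)
  -- integrability of the f-side integrands
  have hbf₁π : ∀ ω, |f₁ (X ω) ^ 2 * π₁ (X ω)| ≤ (1 / c) ^ 2 * 1 := fun ω => by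
    rw [abs_mul]
    refine mul_le_mul (hf₁sqb _) ?_ (abs_nonneg _) (by positivity)
    rw [abs_of_nonneg (hπpos _).le]; linarith [(hπ₁r (X ω)).2, hc0.le]
  have hbf₀π : ∀ ω, |f₀ (X ω) ^ 2 * (1 - π₁ (X ω))| ≤ (1 / c) ^ 2 * 1 := fun ω => by
    rw [abs_mul]
    refine mul_le_mul (hf₀sqb _) ?_ (abs_nonneg _) (by positivity)
    rw [abs_of_nonneg (h1πpos _).le]; linarith [(hπ₁r (X ω)).1, hc0.le]
  have K1 : Integrable (fun ω => f₁ (X ω) ^ 2 * (σ₁sq (X ω) * π₁ (X ω))) P :=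
    (int_bdd_mul hσ₁L1 hmf₁sqπ _ hbf₁π).congr (ae_of_all _ fun ω => by ring)
  have K0 : Integrable (fun ω => f₀ (X ω) ^ 2 * (σ₀sq (X ω) * (1 - π₁ (X ω)))) P :=
    (int_bdd_mul hσ₀L1 hmf₀sqπ _ hbf₀π).congr (ae_of_all _ fun ω => by ring)
  -- pointwise identity for the variance integrand
  have hpt : ∀ x, f₁ x ^ 2 * (σ₁sq x * π₁ x) + f₀ x ^ 2 * (σ₀sq x * (1 - π₁ x))
      = ((if 0 < μ₁ x - μ₀ x then (1:ℝ) else 0) * σ₁sq x / π₁ x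
          + (if μ₁ x - μ₀ x < 0 then (1:ℝ) else 0) * σ₀sq x / (1 - π₁ x))
        + (t₀ ^ 2 * σ₁sq x / π₁ x + (1 - t₀) ^ 2 * σ₀sq x / (1 - π₁ x))
          * (if μ₁ x - μ₀ x = 0 then (1:ℝ) else 0) := fun x => by
    have hπ := hπne x; have h1π := h1πne x
    simp only [hf₁def, hf₀def]
    rcases lt_trichotomy (μ₁ x - μ₀ x) 0 with h | h | h
    · rw [hDt_neg x h, if_neg (by linarith : ¬ (0:ℝ) < μ₁ x - μ₀ x), if_pos h,
        if_neg (ne_of_lt h)]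
      field_simp
      ring
    · rw [hDt_zero x h, if_neg (by rw [h]; exact lt_irrefl 0),
        if_neg (by rw [h]; exact lt_irrefl 0), if_pos h]
      field_simp
      ring
    · rw [hDt_pos x h, if_pos h, if_neg (by linarith : ¬ μ₁ x - μ₀ x < 0),
        if_neg (ne_of_gt h)]
      field_simp
      ring
  have hsplitfin : ∫ ω, f₁ (X ω) ^ 2 * (σ₁sq (X ω) * π₁ (X ω)) ∂P
        + ∫ ω, f₀ (X ω) ^ 2 * (σ₀sq (X ω) * (1 - π₁ (X ω))) ∂P
      = (∫ ω, ((if 0 < μ₁ (X ω) - μ₀ (X ω) then (1 : ℝ) else 0) * σ₁sq (X ω) / π₁ (X ω)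
          + (if μ₁ (X ω) - μ₀ (X ω) < 0 then (1 : ℝ) else 0) * σ₀sq (X ω)
            / (1 - π₁ (X ω))) ∂P)
        + ∫ ω, (t₀ ^ 2 * σ₁sq (X ω) / π₁ (X ω)
            + (1 - t₀) ^ 2 * σ₀sq (X ω) / (1 - π₁ (X ω)))
            * (if μ₁ (X ω) - μ₀ (X ω) = 0 then (1 : ℝ) else 0) ∂P := by
    rw [← integral_add K1 K0, ← integral_add it1 it2]
    exact integral_congr_ae (ae_of_all _ fun ω => hpt (X ω))
  -- identify G with the optimal-rule value
  have hGeq : (fun ω => G (X ω))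
      = fun ω => d₀ (X ω) * μ₁ (X ω) + (1 - d₀ (X ω)) * μ₀ (X ω) := by
    funext ω
    simp only [hGdef, hd₀ (X ω)]
    rcases lt_trichotomy (μ₁ (X ω) - μ₀ (X ω)) 0 with h | h | h
    · rw [hDt_neg _ h, if_neg (by linarith : ¬ (0:ℝ) < μ₁ (X ω) - μ₀ (X ω))]
    · have hμ : μ₁ (X ω) = μ₀ (X ω) := by linarith
      rw [hDt_zero _ h, if_neg (by rw [h]; exact lt_irrefl 0), hμ]; ring
    · rw [hDt_pos _ h, if_pos h]
  -- variance computations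
  have hψL2 : MemLp (aipw X A Y Dt π₁ μ₁ μ₀) 2 P := by
    rw [hψ]; exact MemLp.add hGL2 hRL2
  have Eψ : ∫ ω, aipw X A Y Dt π₁ μ₁ μ₀ ω ∂P = ∫ ω, G (X ω) ∂P := by
    rw [hψ, integral_add hGXint hRint, ER, add_zero]
  have Eψ2 : ∫ ω, aipw X A Y Dt π₁ μ₁ μ₀ ω ^ 2 ∂P
      = ∫ ω, G (X ω) ^ 2 ∂P + ∫ ω, R ω ^ 2 ∂P := by
    have hcross : Integrable (fun ω => 2 * (G (X ω) * R ω)) P := hGR.const_mul 2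
    have hsum2 : Integrable (fun ω => 2 * (G (X ω) * R ω) + R ω ^ 2) P := hcross.add hR2int
    have e1 : ∫ ω, aipw X A Y Dt π₁ μ₁ μ₀ ω ^ 2 ∂P
        = ∫ ω, G (X ω) ^ 2 ∂P + ∫ ω, (2 * (G (X ω) * R ω) + R ω ^ 2) ∂P := by
      rw [hψ, ← integral_add hGsqint hsum2]
      exact integral_congr_ae (ae_of_all _ fun ω => by ring)
    rw [e1, integral_add hcross hR2int, integral_const_mul, EGR, mul_zero, zero_add]
  calc variance (aipw X A Y Dt π₁ μ₁ μ₀) P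
      = (∫ ω, aipw X A Y Dt π₁ μ₁ μ₀ ω ^ 2 ∂P)
        - (∫ ω, aipw X A Y Dt π₁ μ₁ μ₀ ω ∂P) ^ 2 := by
        rw [variance_eq_sub hψL2]; simp only [Pi.pow_apply]
    _ = ((∫ ω, G (X ω) ^ 2 ∂P) - (∫ ω, G (X ω) ∂P) ^ 2) + ∫ ω, R ω ^ 2 ∂P := by
        rw [Eψ2, Eψ]; ring
    _ = variance (fun ω => G (X ω)) P + ∫ ω, R ω ^ 2 ∂P := by
        rw [variance_eq_sub hGL2]; simp only [Pi.pow_apply]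
    _ = variance (fun ω => d₀ (X ω) * μ₁ (X ω) + (1 - d₀ (X ω)) * μ₀ (X ω)) P
        + ∫ ω, ((if 0 < μ₁ (X ω) - μ₀ (X ω) then (1 : ℝ) else 0) * σ₁sq (X ω) / π₁ (X ω)
            + (if μ₁ (X ω) - μ₀ (X ω) < 0 then (1 : ℝ) else 0) * σ₀sq (X ω)
              / (1 - π₁ (X ω))) ∂P
        + ∫ ω, (t₀ ^ 2 * σ₁sq (X ω) / π₁ (X ω)
            + (1 - t₀) ^ 2 * σ₀sq (X ω) / (1 - π₁ (X ω)))
            * (if μ₁ (X ω) - μ₀ (X ω) = 0 then (1 : ℝ) else 0) ∂P := by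
        rw [hGeq, ER2, hsplitfin, add_assoc]
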